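/- Let l > 0, α ∈ [0,1], and define w^α : [−l/2, l/2] → ℝ as the odd function given for x ∈ [0, l/2] by w^α(x) = x for 0 ≤ x ≤ α² l/2 and w^α(x) = (α l/2)·(1 − (1 − x/(l/2))²/(1−α²))^{1/2} for α² l/2 < x ≤ l/2. Then ∫_{−l/2}^{l/2} (w^α)² dx = (l³/12)·α²(2−α²) and ∫_{−l/2}^{l/2} (w^α)'² (w^α)² dx = (l³/12)·α⁴. -/

import Mathlib

open MeasureTheory Set Interval

/-- The odd profile `w^α` on `[-l/2, l/2]`. -/
noncomputable def wA (l α x : ℝ) : ℝ :=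
  if 0 ≤ x then
    (if x ≤ α ^ 2 * l / 2 then x
      else α * l / 2 * Real.sqrt (1 - (1 - x / (l / 2)) ^ 2 / (1 - α ^ 2)))
  else
    -(if -x ≤ α ^ 2 * l / 2 then -x
      else α * l / 2 * Real.sqrt (1 - (1 - (-x) / (l / 2)) ^ 2 / (1 - α ^ 2)))

lemma ae_ne_point (c : ℝ) : ∀ᵐ x : ℝ, x ≠ c := by
  have h : volume ({c} : Set ℝ) = 0 := measure_singleton c
  have := MeasureTheory.measure_eq_zero_iff_ae_notMem.mp h
  simpa using this

lemma intInt_of_ae {f q : ℝ → ℝ} {u v : ℝ} (hq : Continuous q)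
    (h : ∀ᵐ x, x ∈ Ι u v → f x = q x) : IntervalIntegrable f volume u v := by
  have h' : f =ᵐ[volume.restrict (Ι u v)] q := (ae_restrict_iff' measurableSet_uIoc).2 h
  exact (hq.intervalIntegrable u v).congr_ae h'.symm

lemma int_quad (a b c u v : ℝ) :
    (∫ x in u..v, (c + b*x + a*x^2)) = c*(v-u) + b*(v^2-u^2)/2 + a*(v^3-u^3)/3 := by
  have h1 : IntervalIntegrable (fun _ : ℝ => c) volume u v := intervalIntegrable_const
  have h2 : IntervalIntegrable (fun x : ℝ => b*x) volume u v :=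
    (continuous_const.mul continuous_id).intervalIntegrable _ _
  have h3 : IntervalIntegrable (fun x : ℝ => a*x^2) volume u v :=
    (continuous_const.mul (continuous_pow 2)).intervalIntegrable _ _
  rw [intervalIntegral.integral_add (h1.add h2) h3, intervalIntegral.integral_add h1 h2,
    intervalIntegral.integral_const, intervalIntegral.integral_const_mul,
    intervalIntegral.integral_const_mul, integral_id, integral_pow]
  simp only [smul_eq_mul]
  push_cast
  ring

lemma wA_id {l α y : ℝ} (h1 : -(α^2*l/2) ≤ y) (h2 : y ≤ α^2*l/2) : wA l α y = y := by
  rcases le_or_gt 0 y with h | h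
  · rw [wA, if_pos h, if_pos h2]
  · rw [wA, if_neg (not_le.2 h), if_pos (by linarith), neg_neg]

lemma wA_g {l α y : ℝ} (hα0 : 0 ≤ α) (hl : 0 < l) (hy : α^2*l/2 < y) :
    wA l α y = α * l / 2 * Real.sqrt (1 - (1 - y / (l / 2)) ^ 2 / (1 - α ^ 2)) := by
  have h0 : (0:ℝ) ≤ α^2*l/2 := by positivity
  rw [wA, if_pos (by linarith), if_neg (not_le.2 (by linarith))]

lemma wA_neg {l α y : ℝ} (hα0 : 0 ≤ α) (hl : 0 < l) (hy : y < -(α^2*l/2)) :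
    wA l α y = -(α * l / 2 * Real.sqrt (1 - (1 - (-y) / (l / 2)) ^ 2 / (1 - α ^ 2))) := by
  have h0 : (0:ℝ) ≤ α^2*l/2 := by positivity
  rw [wA, if_neg (not_le.2 (by linarith)), if_neg (not_le.2 (by linarith))]

lemma hasDerivAt_g {l α x : ℝ} (hs : 1 - (1 - x / (l / 2)) ^ 2 / (1 - α ^ 2) ≠ 0) :
    HasDerivAt (fun y => α * l / 2 * Real.sqrt (1 - (1 - y / (l / 2)) ^ 2 / (1 - α ^ 2)))
      (α * l / 2 * ((2 * (1 - x / (l/2)) / (l/2) / (1 - α^2)) /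
        (2 * Real.sqrt (1 - (1 - x / (l / 2)) ^ 2 / (1 - α ^ 2))))) x := by
  have h2 : HasDerivAt (fun y : ℝ => 1 - y/(l/2)) (-(1/(l/2))) x := by
    simpa using ((hasDerivAt_id x).div_const (l/2)).const_sub 1
  have H := ((((h2.pow 2).div_const (1-α^2)).const_sub 1).sqrt hs).const_mul (α*l/2)
  refine H.congr_deriv ?_
  simp only [Pi.pow_apply]
  push_cast
  ring

lemma spos {l α x : ℝ} (hl : 0 < l) (hα0 : 0 ≤ α) (hα1 : α < 1)
    (hx : α^2*l/2 < x) (hxL : x < l/2) :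
    0 < 1 - (1 - x / (l / 2)) ^ 2 / (1 - α ^ 2) := by
  have hγ : 0 < 1 - α^2 := by nlinarith
  have hL : (0:ℝ) < l/2 := by linarith
  have ht0 : 0 < 1 - x/(l/2) := by
    have : x/(l/2) < 1 := (div_lt_one hL).2 hxL
    linarith
  have htγ : 1 - x/(l/2) < 1 - α^2 := by
    have : α^2 < x/(l/2) := by rw [lt_div_iff₀ hL]; linarith
    linarith
  rw [sub_pos, div_lt_one hγ]
  nlinarith

lemma mid_vals {l α x : ℝ} (hx : -(α^2*l/2) < x) (hxa : x < α^2*l/2) :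
    wA l α x = x ∧ deriv (wA l α) x = 1 := by
  have hmem : Ioo (-(α^2*l/2)) (α^2*l/2) ∈ nhds x := isOpen_Ioo.mem_nhds ⟨hx, hxa⟩
  have heq : wA l α =ᶠ[nhds x] id :=
    Filter.eventuallyEq_of_mem hmem (fun y hy => wA_id hy.1.le hy.2.le)
  exact ⟨wA_id hx.le hxa.le, by rw [heq.deriv_eq, deriv_id]⟩

lemma right_vals {l α x : ℝ} (hl : 0 < l) (hα0 : 0 ≤ α) (hα1 : α < 1)
    (hx : α^2*l/2 < x) (hxL : x < l/2) :
    (wA l α x)^2 = (α*l/2)^2 * (1 - (1 - x/(l/2))^2/(1-α^2)) ∧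
    deriv (wA l α) x ^ 2 * (wA l α x)^2 = (α*l/2)^2 * α^2 * (1 - x/(l/2))^2 / (1-α^2)^2 := by
  have hγ : (1:ℝ) - α^2 ≠ 0 := by nlinarith
  have hL : (0:ℝ) < l/2 := by linarith
  have hs := spos hl hα0 hα1 hx hxL
  have hS : Real.sqrt (1 - (1 - x / (l / 2)) ^ 2 / (1 - α ^ 2)) ^ 2
      = 1 - (1 - x / (l / 2)) ^ 2 / (1 - α ^ 2) := Real.sq_sqrt hs.le
  have hS0 : Real.sqrt (1 - (1 - x / (l / 2)) ^ 2 / (1 - α ^ 2)) ≠ 0 :=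
    (Real.sqrt_pos.2 hs).ne'
  have hg := wA_g (l := l) (α := α) hα0 hl hx
  have heq : wA l α =ᶠ[nhds x]
      (fun y => α * l / 2 * Real.sqrt (1 - (1 - y / (l / 2)) ^ 2 / (1 - α ^ 2))) :=
    Filter.eventuallyEq_of_mem (Ioi_mem_nhds hx) (fun y hy => wA_g hα0 hl hy)
  have hd : deriv (wA l α) x = α * l / 2 * ((2 * (1 - x / (l/2)) / (l/2) / (1 - α^2)) /
      (2 * Real.sqrt (1 - (1 - x / (l / 2)) ^ 2 / (1 - α ^ 2)))) := by
    rw [heq.deriv_eq, (hasDerivAt_g hs.ne').deriv]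
  constructor
  · rw [hg, mul_pow, hS]
  · rw [hd, hg]
    generalize Real.sqrt (1 - (1 - x / (l / 2)) ^ 2 / (1 - α ^ 2)) = S at hS0
    field_simp

lemma left_vals {l α x : ℝ} (hl : 0 < l) (hα0 : 0 ≤ α) (hα1 : α < 1)
    (hx : -(l/2) < x) (hxa : x < -(α^2*l/2)) :
    (wA l α x)^2 = (α*l/2)^2 * (1 - (1 - (-x)/(l/2))^2/(1-α^2)) ∧
    deriv (wA l α) x ^ 2 * (wA l α x)^2
      = (α*l/2)^2 * α^2 * (1 - (-x)/(l/2))^2 / (1-α^2)^2 := by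
  have hγ : (1:ℝ) - α^2 ≠ 0 := by nlinarith
  have hL : (0:ℝ) < l/2 := by linarith
  have hs := spos (x := -x) hl hα0 hα1 (by linarith) (by linarith)
  have hS : Real.sqrt (1 - (1 - (-x) / (l / 2)) ^ 2 / (1 - α ^ 2)) ^ 2
      = 1 - (1 - (-x) / (l / 2)) ^ 2 / (1 - α ^ 2) := Real.sq_sqrt hs.le
  have hS0 : Real.sqrt (1 - (1 - (-x) / (l / 2)) ^ 2 / (1 - α ^ 2)) ≠ 0 :=
    (Real.sqrt_pos.2 hs).ne'
  have hg := wA_neg (l := l) (α := α) hα0 hl hxa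
  have heq : wA l α =ᶠ[nhds x]
      (fun y => -(α * l / 2 * Real.sqrt (1 - (1 - (-y) / (l / 2)) ^ 2 / (1 - α ^ 2)))) :=
    Filter.eventuallyEq_of_mem (Iio_mem_nhds hxa) (fun y hy => wA_neg hα0 hl hy)
  have hd : deriv (wA l α) x = α * l / 2 * ((2 * (1 - (-x) / (l/2)) / (l/2) / (1 - α^2)) /
      (2 * Real.sqrt (1 - (1 - (-x) / (l / 2)) ^ 2 / (1 - α ^ 2)))) := by
    rw [heq.deriv_eq]
    have H := (hasDerivAt_g (l := l) (α := α) (x := -x) hs.ne')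
    have h1 := (H.comp x (hasDerivAt_neg x)).neg
    have h2 : HasDerivAt (fun y => -(α * l / 2 *
        Real.sqrt (1 - (1 - (-y) / (l / 2)) ^ 2 / (1 - α ^ 2))))
        (α * l / 2 * ((2 * (1 - (-x) / (l/2)) / (l/2) / (1 - α^2)) /
          (2 * Real.sqrt (1 - (1 - (-x) / (l / 2)) ^ 2 / (1 - α ^ 2))))) x := by
      refine h1.congr_deriv ?_
      ring
    exact h2.deriv
  constructor
  · rw [hg, neg_pow, mul_pow, hS]; ring_nf
  · rw [hd, hg]
    generalize Real.sqrt (1 - (1 - (-x) / (l / 2)) ^ 2 / (1 - α ^ 2)) = S at hS0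
    field_simp

set_option maxHeartbeats 2000000 in
theorem stmt12 (l α : ℝ) (hl : 0 < l) (hα : α ∈ Set.Icc (0 : ℝ) 1) :
    (∫ x in (-(l/2))..(l/2), (wA l α x) ^ 2) = l ^ 3 / 12 * (α ^ 2 * (2 - α ^ 2)) ∧
    (∫ x in (-(l/2))..(l/2), (deriv (wA l α) x) ^ 2 * (wA l α x) ^ 2)
      = l ^ 3 / 12 * α ^ 4 := by
  obtain ⟨hα0, hα1⟩ := hα
  have hL : (0:ℝ) < l/2 := by linarith
  have hl0 : l ≠ 0 := hl.ne'
  rcases eq_or_lt_of_le hα1 with h1 | h1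
  · -- α = 1
    subst h1
    have hmid : ∀ x : ℝ, x ∈ Ι (-(l/2)) (l/2) → x ≠ l/2 →
        wA l 1 x = x ∧ deriv (wA l 1) x = 1 := by
      intro x hx hne
      rw [uIoc_of_le (by linarith : -(l/2) ≤ l/2), mem_Ioc] at hx
      exact mid_vals (by norm_num; linarith [hx.1]) (by norm_num; exact lt_of_le_of_ne hx.2 hne)
    have hc1 : ∀ᵐ x : ℝ, x ∈ Ι (-(l/2)) (l/2) → (wA l 1 x)^2 = 0 + 0*x + 1*x^2 := by
      filter_upwards [ae_ne_point (l/2)] with x hne hx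
      rw [(hmid x hx hne).1]; ring
    have hc2 : ∀ᵐ x : ℝ, x ∈ Ι (-(l/2)) (l/2) →
        deriv (wA l 1) x ^ 2 * (wA l 1 x)^2 = 0 + 0*x + 1*x^2 := by
      filter_upwards [ae_ne_point (l/2)] with x hne hx
      rw [(hmid x hx hne).1, (hmid x hx hne).2]; ring
    constructor
    · rw [intervalIntegral.integral_congr_ae hc1, int_quad]; ring
    · rw [intervalIntegral.integral_congr_ae hc2, int_quad]; ring
  · -- α < 1
    have hγ : (1:ℝ) - α^2 ≠ 0 := by nlinarith
    have ha0 : (0:ℝ) ≤ α^2*l/2 := by positivity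
    have hα2 : α^2 ≤ 1 := by nlinarith
    have haL : α^2*l/2 ≤ l/2 := by nlinarith [mul_nonneg (by linarith : (0:ℝ) ≤ 1-α^2) hl.le]
    -- middle congruences
    have hm : ∀ᵐ x : ℝ, x ∈ Ι (-(α^2*l/2)) (α^2*l/2) →
        (wA l α x)^2 = 0 + 0*x + 1*x^2 ∧
        deriv (wA l α) x ^ 2 * (wA l α x)^2 = 0 + 0*x + 1*x^2 := by
      filter_upwards [ae_ne_point (α^2*l/2)] with x hne hx
      rw [uIoc_of_le (by linarith), mem_Ioc] at hx
      have h := mid_vals hx.1 (lt_of_le_of_ne hx.2 hne)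
      constructor
      · rw [h.1]; ring
      · rw [h.1, h.2]; ring
    have hm1 := hm.mono (fun x h hx => (h hx).1)
    have hm2 := hm.mono (fun x h hx => (h hx).2)
    -- right congruences
    have hr : ∀ᵐ x : ℝ, x ∈ Ι (α^2*l/2) (l/2) →
        (wA l α x)^2 = (α*l/2)^2*(1 - 1/(1-α^2)) + (α*l/2)^2*(2/((l/2)*(1-α^2)))*x
          + (-((α*l/2)^2/((l/2)^2*(1-α^2))))*x^2 ∧
        deriv (wA l α) x ^ 2 * (wA l α x)^2 =
          (α*l/2)^2*α^2/(1-α^2)^2 + (-((α*l/2)^2*α^2*2/((l/2)*(1-α^2)^2)))*x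
          + ((α*l/2)^2*α^2/((l/2)^2*(1-α^2)^2))*x^2 := by
      filter_upwards [ae_ne_point (l/2)] with x hne hx
      rw [uIoc_of_le haL, mem_Ioc] at hx
      have h := right_vals hl hα0 h1 hx.1 (lt_of_le_of_ne hx.2 hne)
      constructor
      · rw [h.1]; field_simp; ring
      · rw [h.2]; field_simp; ring
    have hr1 := hr.mono (fun x h hx => (h hx).1)
    have hr2 := hr.mono (fun x h hx => (h hx).2)
    -- left congruences
    have hlf : ∀ᵐ x : ℝ, x ∈ Ι (-(l/2)) (-(α^2*l/2)) →
        (wA l α x)^2 = (α*l/2)^2*(1 - 1/(1-α^2)) + (-((α*l/2)^2*(2/((l/2)*(1-α^2)))))*x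
          + (-((α*l/2)^2/((l/2)^2*(1-α^2))))*x^2 ∧
        deriv (wA l α) x ^ 2 * (wA l α x)^2 =
          (α*l/2)^2*α^2/(1-α^2)^2 + ((α*l/2)^2*α^2*2/((l/2)*(1-α^2)^2))*x
          + ((α*l/2)^2*α^2/((l/2)^2*(1-α^2)^2))*x^2 := by
      filter_upwards [ae_ne_point (-(α^2*l/2))] with x hne hx
      rw [uIoc_of_le (by linarith), mem_Ioc] at hx
      have h := left_vals hl hα0 h1 hx.1 (lt_of_le_of_ne hx.2 hne)
      constructor
      · rw [h.1]; field_simp; ring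
      · rw [h.2]; field_simp; ring
    have hl1 := hlf.mono (fun x h hx => (h hx).1)
    have hl2 := hlf.mono (fun x h hx => (h hx).2)
    -- integrability
    have Jl1 : IntervalIntegrable (fun x => (wA l α x)^2) volume (-(l/2)) (-(α^2*l/2)) :=
      intInt_of_ae (by fun_prop) hl1
    have Jm1 : IntervalIntegrable (fun x => (wA l α x)^2) volume (-(α^2*l/2)) (α^2*l/2) :=
      intInt_of_ae (by fun_prop) hm1
    have Jr1 : IntervalIntegrable (fun x => (wA l α x)^2) volume (α^2*l/2) (l/2) :=
      intInt_of_ae (by fun_prop) hr1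
    have Jl2 : IntervalIntegrable (fun x => deriv (wA l α) x ^ 2 * (wA l α x)^2)
        volume (-(l/2)) (-(α^2*l/2)) := intInt_of_ae (by fun_prop) hl2
    have Jm2 : IntervalIntegrable (fun x => deriv (wA l α) x ^ 2 * (wA l α x)^2)
        volume (-(α^2*l/2)) (α^2*l/2) := intInt_of_ae (by fun_prop) hm2
    have Jr2 : IntervalIntegrable (fun x => deriv (wA l α) x ^ 2 * (wA l α x)^2)
        volume (α^2*l/2) (l/2) := intInt_of_ae (by fun_prop) hr2
    constructor
    · rw [← intervalIntegral.integral_add_adjacent_intervals Jl1 (Jm1.trans Jr1),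
        ← intervalIntegral.integral_add_adjacent_intervals Jm1 Jr1,
        intervalIntegral.integral_congr_ae hl1, intervalIntegral.integral_congr_ae hm1,
        intervalIntegral.integral_congr_ae hr1, int_quad, int_quad, int_quad]
      field_simp
      ring
    · rw [← intervalIntegral.integral_add_adjacent_intervals Jl2 (Jm2.trans Jr2),
        ← intervalIntegral.integral_add_adjacent_intervals Jm2 Jr2,
        intervalIntegral.integral_congr_ae hl2, intervalIntegral.integral_congr_ae hm2,
        intervalIntegral.integral_congr_ae hr2, int_quad, int_quad, int_quad]
      field_simp
      ring
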